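/- Let K be a field with (2 : K) ≠ 0, let i, j ∈ K satisfy i² + 1 = 0 and j² + 1 = 0, and let a ∈ K with a ≠ 0. Then the linear maps f₁, f₂ : K² → K² defined by f₁((x₁,x₂)) = ((a/2 + 1/(2a))·x₁ + (a/2 − 1/(2a))·j·x₂, −(a/2 − 1/(2a))·i·x₁ − (a/2 + 1/(2a))·i·j·x₂) and f₂((x₁,x₂)) = ((a/2 + 1/(2a))·x₁ − (a/2 − 1/(2a))·j·x₂, −(a/2 − 1/(2a))·i·x₁ + (a/2 + 1/(2a))·i·j·x₂) are orthogonal, i.e., for every (x₁,x₂) ∈ K², writing f₁((x₁,x₂)) = (u₁,u₂) and f₂((x₁,x₂)) = (v₁,v₂), one has u₁² + u₂² = x₁² + x₂² and v₁² + v₂² = x₁² + x₂². -/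
import Mathlib


/-- The linear maps `f₁` and `f₂` from the proof of Theorem 4 are orthogonal. -/
theorem stmt_14 {K : Type*} [Field K] (h2 : (2 : K) ≠ 0)
    (i j : K) (hi : i ^ 2 + 1 = 0) (hj : j ^ 2 + 1 = 0)
    (a : K) (ha : a ≠ 0) :
    ∀ x₁ x₂ : K,
      ((a / 2 + 1 / (2 * a)) * x₁ + (a / 2 - 1 / (2 * a)) * j * x₂) ^ 2 +
        (-(a / 2 - 1 / (2 * a)) * i * x₁ - (a / 2 + 1 / (2 * a)) * i * j * x₂) ^ 2 =
        x₁ ^ 2 + x₂ ^ 2 ∧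
      ((a / 2 + 1 / (2 * a)) * x₁ - (a / 2 - 1 / (2 * a)) * j * x₂) ^ 2 +
        (-(a / 2 - 1 / (2 * a)) * i * x₁ + (a / 2 + 1 / (2 * a)) * i * j * x₂) ^ 2 =
        x₁ ^ 2 + x₂ ^ 2 := by
  intro x₁ x₂
  have hp : (a / 2 + 1 / (2 * a)) ^ 2 - (a / 2 - 1 / (2 * a)) ^ 2 = 1 := by
    field_simp
    ring
  constructor
  · linear_combination ((a / 2 - 1 / (2 * a)) * x₁ + (a / 2 + 1 / (2 * a)) * j * x₂) ^ 2 * hi +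
      ((a / 2 - 1 / (2 * a)) ^ 2 - (a / 2 + 1 / (2 * a)) ^ 2) * x₂ ^ 2 * hj +
      (x₁ ^ 2 + x₂ ^ 2) * hp
  · linear_combination ((a / 2 - 1 / (2 * a)) * x₁ - (a / 2 + 1 / (2 * a)) * j * x₂) ^ 2 * hi +
      ((a / 2 - 1 / (2 * a)) ^ 2 - (a / 2 + 1 / (2 * a)) ^ 2) * x₂ ^ 2 * hj +
      (x₁ ^ 2 + x₂ ^ 2) * hp
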